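/- For symmetric positive definite A₁, A₂ and t ∈ [0,1], the line segment l(t) = t·A₁^{-1/2}(A₁A₂)^{1/2} + (1−t)·A₁^{1/2} consists of invertible matrices, i.e., det(l(t)) > 0 for all t ∈ [0,1]. -/

import Mathlib

open Matrix

lemma posSemidef_smul_aux {n : ℕ} {N : Matrix (Fin n) (Fin n) ℝ} (hN : N.PosSemidef)
    {t : ℝ} (ht : 0 ≤ t) : (t • N).PosSemidef := by
  constructor
  · unfold Matrix.IsHermitian
    rw [Matrix.conjTranspose_smul, hN.1]
    simp
  · intro x
    have := hN.2 x
    simpa [smul_mulVec, dotProduct_smul, Finsupp.mul_sum, mul_assoc, mul_left_comm] using mul_nonneg ht this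

/-- The lifted segment `l(t) = t·A₁^{-1/2}(A₁A₂)^{1/2} + (1−t)·A₁^{1/2}` is
non-degenerate: `det(l(t)) > 0` for all `t ∈ [0,1]`. Here `S1` is the positive
definite square root of `A₁`, `N` that of `S1·A₂·S1`, and
`(A₁A₂)^{1/2} = S1·N·S1⁻¹`. -/
theorem lifted_segment_det_pos {n : ℕ} (A₁ A₂ S1 N : Matrix (Fin n) (Fin n) ℝ)
    (hA₁ : A₁.PosDef) (hA₂ : A₂.PosDef)
    (hS1 : S1.PosDef) (hS1sq : S1 * S1 = A₁)
    (hN : N.PosDef) (hNsq : N * N = S1 * A₂ * S1) :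
    ∀ t : ℝ, t ∈ Set.Icc (0:ℝ) 1 →
      0 < (t • (S1⁻¹ * (S1 * N * S1⁻¹)) + (1 - t) • S1).det := by
  intro t ht
  obtain ⟨ht0, ht1⟩ := ht
  have hS1inv : IsUnit S1.det := hS1.isUnit.map (Matrix.detMonoidHom)
  have key : t • (S1⁻¹ * (S1 * N * S1⁻¹)) + (1 - t) • S1
      = (t • N + (1 - t) • A₁) * S1⁻¹ := by
    rw [← hS1sq]
    rw [show S1⁻¹ * (S1 * N * S1⁻¹) = N * S1⁻¹ by
      rw [← Matrix.mul_assoc, ← Matrix.mul_assoc, Matrix.nonsing_inv_mul _ hS1inv,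
        Matrix.one_mul]]
    rw [Matrix.add_mul, Matrix.smul_mul, Matrix.smul_mul,
      Matrix.mul_assoc, Matrix.mul_nonsing_inv _ hS1inv, Matrix.mul_one]
  rw [key, Matrix.det_mul]
  have hM : (t • N + (1 - t) • A₁).PosDef := by
    rcases lt_or_eq_of_le ht1 with h | h
    · have h1 : ((1 - t) • A₁).PosDef := by
        constructor
        · unfold Matrix.IsHermitian
          rw [Matrix.conjTranspose_smul, hA₁.1]
          simp
        · intro x hx
          have := hA₁.2 hx
          have h1t : (0:ℝ) < 1 - t := by linarith
          simpa [smul_mulVec, dotProduct_smul, Finsupp.mul_sum, mul_assoc, mul_left_comm] using mul_pos h1t this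
      exact Matrix.PosDef.posSemidef_add (posSemidef_smul_aux hN.posSemidef ht0) h1
    · subst h
      simpa using hN
  have : (0:ℝ) < S1⁻¹.det := by
    rw [Matrix.det_nonsing_inv, Ring.inverse_eq_inv]
    exact inv_pos.mpr hS1.det_pos
  exact mul_pos hM.det_pos this
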